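/- Let [a,b] be of class P₁ (0 < a ≤ b) and [c,d] of class P with c = 0 < d. Then the relational division {z : ∃ x ∈ [a,b], ∃ y ∈ [c,d], z*y = x} = {z : z ≥ a/d} (an unbounded ray), which excludes 0. -/

import Mathlib

/-- Relational division, class P₁ by class P₀ (c = 0 < d): result is the ray [a/d, ∞),
which does not contain 0. -/
theorem interval_div_P1_P0 (a b d : ℝ) (hab : a ≤ b) (ha : 0 < a) (hd : 0 < d) :
    {z : ℝ | ∃ x ∈ Set.Icc a b, ∃ y ∈ Set.Icc (0 : ℝ) d, z * y = x} = {z : ℝ | a / d ≤ z} ∧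
    (0 : ℝ) ∉ {z : ℝ | ∃ x ∈ Set.Icc a b, ∃ y ∈ Set.Icc (0 : ℝ) d, z * y = x} := by
  constructor
  · ext z
    simp only [Set.mem_setOf_eq, Set.mem_Icc]
    constructor
    · rintro ⟨x, ⟨hax, hxb⟩, y, ⟨hy0, hyd⟩, hzy⟩
      have hx : 0 < x := lt_of_lt_of_le ha hax
      have hy : 0 < y := by
        rcases hy0.lt_or_eq with h | h
        · exact h
        · exfalso; rw [← h, mul_zero] at hzy; linarith
      have hz : z = x / y := by field_simp [← hzy, mul_comm]; exact hzy
      rw [hz]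
      exact div_le_div₀ hx.le hax hy hyd
    · intro hz
      have hz0 : 0 < z := lt_of_lt_of_le (div_pos ha hd) hz
      refine ⟨a, ⟨le_refl a, hab⟩, a / z, ⟨(div_pos ha hz0).le, ?_⟩, by field_simp⟩
      rw [div_le_iff₀ hz0]
      have : a / d * d ≤ z * d := by nlinarith
      rw [div_mul_cancel₀ a hd.ne'] at this
      linarith
  · rintro ⟨x, ⟨hax, _⟩, y, _, hzy⟩
    rw [zero_mul] at hzy
    linarith
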